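/- Let H = (V, E, ω) be a hypergraph with distinct vertices s, t ∈ V, let f be a maximum (s,t)-flow in the Lawler network N_L of H, and define A := {s} ∪ {v ∈ V | ∃ e ∈ E : v ∈ e and the second bridging node e″ of e is reachable from s in the residual network N_f}. Then s ∈ A, t ∉ A, and the bipartition (A, V∖A) is a minimum (s,t)-cut of H: its cut weight Σ{ω(e) : e ∈ E, e ∩ A ≠ ∅ and e ∖ A ≠ ∅} equals the minimum, over all sets S ⊆ V with s ∈ S and t ∉ S, of the cut weight of (S, V∖S). -/

import Mathlib

open scoped ENNReal

/-- Capacities of the Lawler network of a hypergraph: nodes are the hypernodes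
(`Sum.inl`) together with two bridging nodes per net (`Sum.inr (e, false)` is `e′`,
`Sum.inr (e, true)` is `e″`). -/
noncomputable def lawlerCap {V E : Type} [DecidableEq V] [DecidableEq E]
    (pins : E → Finset V) (ω : E → ℝ) :
    V ⊕ E × Bool → V ⊕ E × Bool → ℝ≥0∞
  | Sum.inl p, Sum.inr (e, false) => if p ∈ pins e then ⊤ else 0
  | Sum.inr (e, false), Sum.inr (e', true) => if e = e' then ENNReal.ofReal (ω e) else 0
  | Sum.inr (e, true), Sum.inl p => if p ∈ pins e then ⊤ else 0
  | _, _ => 0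

/-- `f` is an `(s,t)`-flow for the capacity function `c`. -/
def IsFlow {ν : Type} [Fintype ν] (c : ν → ν → ℝ≥0∞) (s t : ν) (f : ν → ν → ℝ) : Prop :=
  (∀ u v, (f u v : EReal) ≤ (c u v : EReal)) ∧
  (∀ u v, f u v = - f v u) ∧
  (∀ u, u ≠ s → u ≠ t → ∑ v, f u v = 0)

/-- The value of a flow. -/
noncomputable def flowValue {ν : Type} [Fintype ν] (f : ν → ν → ℝ) (s : ν) : ℝ :=
  ∑ v, f s v

/-- `f` is a maximum `(s,t)`-flow. -/
def IsMaxFlow {ν : Type} [Fintype ν] (c : ν → ν → ℝ≥0∞) (s t : ν) (f : ν → ν → ℝ) : Prop :=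
  IsFlow c s t f ∧ ∀ g, IsFlow c s t g → flowValue g s ≤ flowValue f s

/-- `(u,v)` is an edge of the residual network, i.e. `r_f(u,v) = c(u,v) - f(u,v) > 0`. -/
def ResidualEdge {ν : Type} (c : ν → ν → ℝ≥0∞) (f : ν → ν → ℝ) (u v : ν) : Prop :=
  (f u v : EReal) < (c u v : EReal)

open scoped Classical in
/-- The capacity of the `(s,t)`-cut `(S, 𝒱 ∖ S)`. -/
noncomputable def cutCap {ν : Type} [Fintype ν] (c : ν → ν → ℝ≥0∞) (S : Set ν) : ℝ≥0∞ :=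
  ∑ u, ∑ v, if u ∈ S ∧ v ∉ S then c u v else 0

open scoped Classical in
/-- The cut weight of the bipartition `(S, V ∖ S)` of a hypergraph: the total
weight of all nets split by `S`. -/
noncomputable def hypCutWeight {V E : Type} [Fintype E]
    (pins : E → Finset V) (ω : E → ℝ) (S : Set V) : ℝ :=
  ∑ e, if (∃ p ∈ pins e, p ∈ S) ∧ (∃ p ∈ pins e, p ∉ S) then ω e else 0

/-! ### Auxiliary lemmas -/

lemma coe_toReal_ennreal (x : ℝ≥0∞) (hx : x ≠ ⊤) : ((x.toReal : ℝ) : EReal) = (x : EReal) := by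
  rw [← EReal.toReal_coe_ennreal]
  exact EReal.coe_toReal (by simpa using hx) (EReal.coe_ennreal_ne_bot x)

open List in
lemma exists_nodup_chain_aux {α : Type} {r : α → α → Prop} {b : α} :
    ∀ (n : ℕ) (a : α) (l : List α), l.length ≤ n → List.Chain r a l →
      (a :: l).getLast (List.cons_ne_nil _ _) = b →
      ∃ l', List.Chain r a l' ∧ (a :: l').getLast (List.cons_ne_nil _ _) = b ∧
        (a :: l').Nodup ∧ ∀ x ∈ l', x ∈ l := by
  intro n
  induction n with
  | zero =>
    intro a l hlen hc hlast
    have : l = [] := List.eq_nil_of_length_eq_zero (Nat.le_zero.mp hlen)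
    subst this
    exact ⟨[], List.Chain.nil, hlast, List.nodup_singleton a, by simp⟩
  | succ n ih =>
    intro a l hlen hc hlast
    by_cases ha : a ∈ l
    · obtain ⟨l₁, l₂, rfl⟩ := List.append_of_mem ha
      have hsuf : (a :: l₂) <:+ (a :: (l₁ ++ a :: l₂)) := ⟨a :: l₁, by simp⟩
      have hc' : List.Chain r a l₂ := by
        have : List.Chain' r (a :: (l₁ ++ a :: l₂)) := hc
        exact (this.suffix hsuf : List.Chain' r (a :: l₂))
      have hlast' : (a :: l₂).getLast (List.cons_ne_nil _ _) = b := by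
        rw [← hlast]
        have : a :: (l₁ ++ a :: l₂) = (a :: l₁) ++ (a :: l₂) := by simp
        rw [List.getLast_congr _ _ this, List.getLast_append_of_right_ne_nil (a :: l₁) (a :: l₂) (List.cons_ne_nil _ _)]
        simp
      have hlen' : l₂.length ≤ n := by
        simp only [List.length_append, List.length_cons] at hlen; omega
      obtain ⟨l', h1, h2, h3, h4⟩ := ih a l₂ hlen' hc' hlast'
      exact ⟨l', h1, h2, h3, fun x hx => by simp [h4 x hx]⟩
    · cases l with
      | nil => exact ⟨[], List.Chain.nil, hlast, List.nodup_singleton a, by simp⟩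
      | cons x xs =>
        replace hc : r a x ∧ List.IsChain r (x :: xs) := List.isChain_cons_cons.mp hc
        have hlast' : (x :: xs).getLast (List.cons_ne_nil _ _) = b := by
          rw [← hlast, List.getLast_cons_cons]
        have hxlen : xs.length ≤ n := by simp only [List.length_cons] at hlen; omega
        obtain ⟨m, h1, h2, h3, h4⟩ := ih x xs hxlen hc.2 hlast'
        refine ⟨x :: m, List.chain_cons.mpr ⟨hc.1, h1⟩, by rw [List.getLast_cons_cons]; exact h2,
          ?_, ?_⟩
        · refine List.nodup_cons.mpr ⟨?_, h3⟩
          intro hmem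
          rcases List.mem_cons.mp hmem with h | h
          · exact ha (h ▸ (List.mem_cons_self : x ∈ x :: xs))
          · exact ha (List.mem_cons_of_mem x (h4 a h))
        · intro y hy
          rcases List.mem_cons.mp hy with h | h
          · exact h ▸ (List.mem_cons_self : x ∈ x :: xs)
          · exact List.mem_cons_of_mem x (h4 y h)

lemma exists_nodup_chain' {α : Type} {r : α → α → Prop} {a b : α}
    (h : Relation.ReflTransGen r a b) :
    ∃ l, List.Chain r a l ∧ (a :: l).getLast (List.cons_ne_nil _ _) = b ∧ (a :: l).Nodup := by
  obtain ⟨l, hc, hl⟩ := List.exists_isChain_cons_of_relationReflTransGen h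
  obtain ⟨l', h1, h2, h3, _⟩ := exists_nodup_chain_aux l.length a l le_rfl hc hl
  exact ⟨l', h1, h2, h3⟩

lemma not_reachable_of_maxflow {ν : Type} [Fintype ν] (c : ν → ν → ℝ≥0∞) (s t : ν) (hst : s ≠ t)
    (f : ν → ν → ℝ) (hf : IsMaxFlow (ν := ν) c s t f) :
    ¬ Relation.ReflTransGen (ResidualEdge c f) s t := by
  classical
  intro hreach
  obtain ⟨l, hchain, hlast, hnodup⟩ := exists_nodup_chain' hreach
  set L := s :: l with hL
  set n := l.length with hn
  have hnpos : 0 < n := by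
    rcases l with _ | ⟨x, xs⟩
    · exact absurd hlast hst
    · simp [hn]
  have hlenL : L.length = n + 1 := by simp [hL, hn]
  set P : ℕ → ν := fun i => L.getD i t with hP
  have hPget : ∀ (i : ℕ) (h : i < n + 1), P i = L.get ⟨i, by omega⟩ := by
    intro i h
    simp only [hP]
    exact List.getD_eq_getElem _ _ (by omega)
  have hP0 : P 0 = s := by simp [hP, hL]
  have hPn : P n = t := by
    rw [hPget n (by omega)]
    have h := (List.getLast_eq_getElem (l := L) (by simp [hL])).symm.trans hlast
    simp only [List.get_eq_getElem]
    convert h using 3 <;> omega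
  have hres : ∀ i, i < n → ResidualEdge c f (P i) (P (i+1)) := by
    intro i hi
    have hch : List.IsChain (ResidualEdge c f) L := hchain
    rw [List.isChain_iff_getElem] at hch
    have := hch i (by omega)
    rwa [hPget i (by omega), hPget (i+1) (by omega)]
  have hinj : ∀ i j, i < n + 1 → j < n + 1 → P i = P j → i = j := by
    intro i j hi hj hij
    rw [hPget i hi, hPget j hj] at hij
    have := (List.Nodup.get_inj_iff hnodup).mp hij
    simpa using this
  set eps : ℕ → ℝ := fun i =>
    if c (P i) (P (i+1)) = ⊤ then 1 else (c (P i) (P (i+1))).toReal - f (P i) (P (i+1)) with heps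
  have heps_pos : ∀ i, i < n → 0 < eps i := by
    intro i hi
    have hr := hres i hi
    simp only [heps]
    split_ifs with hc'
    · exact one_pos
    · have h2 : (f (P i) (P (i+1)) : EReal) < ((c (P i) (P (i+1))).toReal : EReal) := by
        rw [coe_toReal_ennreal _ hc']; exact hr
      have := EReal.coe_lt_coe_iff.mp h2
      linarith
  have heps_cap : ∀ i, i < n →
      ((f (P i) (P (i+1)) + eps i : ℝ) : EReal) ≤ (c (P i) (P (i+1)) : EReal) := by
    intro i hi
    simp only [heps]
    split_ifs with hc'
    · rw [hc']; simp
    · rw [← coe_toReal_ennreal _ hc']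
      apply EReal.coe_le_coe_iff.mpr
      linarith
  have hne : (Finset.range n).Nonempty := ⟨0, Finset.mem_range.mpr hnpos⟩
  set ε : ℝ := (Finset.range n).inf' hne eps with hεdef
  have hε_pos : 0 < ε :=
    (Finset.lt_inf'_iff hne).mpr fun i hi => heps_pos i (Finset.mem_range.mp hi)
  have hε_le : ∀ i, i < n → ε ≤ eps i := fun i hi => Finset.inf'_le _ (Finset.mem_range.mpr hi)
  set δ : ν → ν → ℝ := fun u v => ∑ i ∈ Finset.range n,
    ((if (u,v) = (P i, P (i+1)) then ε else 0) - (if (u,v) = (P (i+1), P i) then ε else 0))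
    with hδ
  have hδskew : ∀ u v, δ u v = - δ v u := by
    intro u v
    simp only [hδ, ← Finset.sum_neg_distrib]
    apply Finset.sum_congr rfl
    intro i _
    have h1 : ((u,v) = (P i, P (i+1))) = ((v,u) = (P (i+1), P i)) := by
      simp [Prod.ext_iff, and_comm]
    have h2 : ((u,v) = (P (i+1), P i)) = ((v,u) = (P i, P (i+1))) := by
      simp [Prod.ext_iff, and_comm]
    simp only [h1, h2]; ring
  have hδrow : ∀ u, ∑ v, δ u v = (if u = P 0 then ε else 0) - (if u = P n then ε else 0) := by
    intro u
    simp only [hδ]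
    rw [Finset.sum_comm]
    have inner : ∀ (a b : ν), (∑ v, if (u,v) = (a,b) then ε else 0) = if u = a then ε else 0 := by
      intro a b
      by_cases h : u = a <;> simp [Prod.ext_iff, h]
    calc ∑ i ∈ Finset.range n, ∑ v,
          ((if (u,v) = (P i, P (i+1)) then ε else 0) - (if (u,v) = (P (i+1), P i) then ε else 0))
        = ∑ i ∈ Finset.range n,
          ((if u = P i then ε else 0) - (if u = P (i+1) then ε else 0)) := by
          apply Finset.sum_congr rfl
          intro i _
          rw [Finset.sum_sub_distrib, inner, inner]
      _ = (if u = P 0 then ε else 0) - (if u = P n then ε else 0) :=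
          Finset.sum_range_sub' (fun i => if u = P i then ε else 0) n
  have hδ_nonpos : ∀ u v, (¬ ∃ i, i < n ∧ (u,v) = (P i, P (i+1))) → δ u v ≤ 0 := by
    intro u v h
    push_neg at h
    apply Finset.sum_nonpos
    intro i hi
    rw [if_neg (h i (Finset.mem_range.mp hi))]
    have : (0:ℝ) - (if (u,v) = (P (i+1), P i) then ε else 0) ≤ 0 := by
      split_ifs <;> simp [le_of_lt hε_pos]
    simpa using this
  have hδ_eq : ∀ u v i, i < n → (u,v) = (P i, P (i+1)) → δ u v = ε := by
    intro u v i hi huv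
    have huv' := huv
    simp only [Prod.ext_iff] at huv'
    obtain ⟨hu, hv⟩ := huv'
    have hbwd : ∀ j, j < n → ¬ ((u,v) = (P (j+1), P j)) := by
      intro j hj hbad
      simp only [Prod.ext_iff] at hbad
      obtain ⟨h1, h2⟩ := hbad
      have e1 : i = j + 1 := hinj i (j+1) (by omega) (by omega) (by rw [← hu, h1])
      have e2 : i + 1 = j := hinj (i+1) j (by omega) (by omega) (by rw [← hv, h2])
      omega
    simp only [hδ]
    rw [Finset.sum_sub_distrib]
    have hz : (∑ j ∈ Finset.range n, if (u,v) = (P (j+1), P j) then ε else 0) = 0 := by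
      apply Finset.sum_eq_zero
      intro j hj
      rw [if_neg (hbwd j (Finset.mem_range.mp hj))]
    rw [hz, sub_zero]
    rw [Finset.sum_eq_single i]
    · rw [if_pos huv]
    · intro j hj hji
      have hj' := Finset.mem_range.mp hj
      rw [if_neg]
      intro hbad
      simp only [Prod.ext_iff] at hbad
      exact hji (hinj j i (by omega) (by omega) (by rw [← hbad.1]; exact hu))
    · intro h; exact absurd (Finset.mem_range.mpr hi) h
  obtain ⟨hcap, hskew, hcons⟩ := hf.1
  set g : ν → ν → ℝ := fun u v => f u v + δ u v with hg
  have hgflow : IsFlow c s t g := by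
    refine ⟨?_, ?_, ?_⟩
    · intro u v
      by_cases h : ∃ i, i < n ∧ (u,v) = (P i, P (i+1))
      · obtain ⟨i, hi, huv⟩ := h
        have hd := hδ_eq u v i hi huv
        simp only [Prod.ext_iff] at huv
        obtain ⟨hu, hv⟩ := huv
        have hgval : g u v = f u v + ε := by
          simp only [hg]; rw [hd]
        rw [hgval, hu, hv]
        refine le_trans ?_ (heps_cap i hi)
        apply EReal.coe_le_coe_iff.mpr
        have := hε_le i hi
        linarith
      · have hd := hδ_nonpos u v h
        have : g u v ≤ f u v := by simp only [hg]; linarith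
        exact le_trans (EReal.coe_le_coe_iff.mpr this) (hcap u v)
    · intro u v
      show f u v + δ u v = -(f v u + δ v u)
      rw [hskew u v, hδskew u v]; ring
    · intro u hu hut
      show ∑ v, (f u v + δ u v) = 0
      rw [Finset.sum_add_distrib, hcons u hu hut, hδrow u, hP0, hPn]
      rw [if_neg hu, if_neg hut]
      ring
  have hle : flowValue g s ≤ flowValue f s := hf.2 g hgflow
  have heq : flowValue g s = flowValue f s + ε := by
    show ∑ v, (f s v + δ s v) = (∑ v, f s v) + ε
    rw [Finset.sum_add_distrib, hδrow s, hP0, hPn]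
    rw [if_pos rfl, if_neg hst]
    ring
  linarith

lemma flow_across_cut {ν : Type} [Fintype ν] {c : ν → ν → ℝ≥0∞} {s t : ν}
    {f : ν → ν → ℝ} (hf : IsFlow c s t f)
    (S : Set ν) [DecidablePred (· ∈ S)] (hs : s ∈ S) (ht : t ∉ S) :
    flowValue f s = ∑ u, ∑ v, if u ∈ S ∧ v ∉ S then f u v else 0 := by
  classical
  obtain ⟨hcap, hskew, hcons⟩ := hf
  have hsplit : ∀ u : ν, u ∈ S → (∑ v, f u v) =
      (∑ v, if v ∈ S then f u v else 0) + (∑ v, if v ∉ S then f u v else 0) := by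
    intro u _
    rw [← Finset.sum_add_distrib]
    apply Finset.sum_congr rfl
    intro v _
    by_cases h : v ∈ S <;> simp [h]
  -- T : sum over S × S is zero
  have hT : (∑ u, ∑ v, if u ∈ S ∧ v ∈ S then f u v else 0) = 0 := by
    have h1 : (∑ u, ∑ v, if u ∈ S ∧ v ∈ S then f u v else 0)
        = - (∑ u, ∑ v, if u ∈ S ∧ v ∈ S then f u v else 0) := by
      nth_rewrite 2 [Finset.sum_comm]
      rw [← Finset.sum_neg_distrib]
      apply Finset.sum_congr rfl; intro u _
      rw [← Finset.sum_neg_distrib]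
      apply Finset.sum_congr rfl; intro v _
      rw [hskew u v]
      by_cases h1 : u ∈ S <;> by_cases h2 : v ∈ S <;> simp [h1, h2, and_comm]
    linarith
  have hrow : (∑ u, ∑ v, if u ∈ S ∧ v ∈ S then f u v else 0)
      + (∑ u, ∑ v, if u ∈ S ∧ v ∉ S then f u v else 0) = flowValue f s := by
    rw [← Finset.sum_add_distrib]
    have : ∀ u : ν, (∑ v, if u ∈ S ∧ v ∈ S then f u v else 0)
        + (∑ v, if u ∈ S ∧ v ∉ S then f u v else 0) = if u = s then flowValue f s else 0 := by
      intro u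
      by_cases hu : u ∈ S
      · simp only [hu, true_and]
        rw [← hsplit u hu]
        by_cases hus : u = s
        · subst hus; simp [flowValue]
        · rw [hcons u hus (fun h => ht (h ▸ hu)), if_neg hus]
      · have hns : u ≠ s := fun h => hu (h ▸ hs)
        simp [hu, hns]
    rw [Finset.sum_congr rfl (fun u _ => this u)]
    simp
  linarith

section LawlerAux
variable {V E : Type} [Fintype V] [Fintype E] [DecidableEq V] [DecidableEq E]
  (pins : E → Finset V) (ω : E → ℝ)

lemma cap_inl_inl (p q : V) : lawlerCap pins ω (Sum.inl p) (Sum.inl q) = 0 := rfl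
lemma cap_inl_inrT (p : V) (e : E) :
    lawlerCap pins ω (Sum.inl p) (Sum.inr (e, true)) = 0 := rfl
lemma cap_inl_inrF (p : V) (e : E) :
    lawlerCap pins ω (Sum.inl p) (Sum.inr (e, false)) = if p ∈ pins e then ⊤ else 0 := rfl
lemma cap_inrF_inl (e : E) (p : V) :
    lawlerCap pins ω (Sum.inr (e, false)) (Sum.inl p) = 0 := rfl
lemma cap_inrT_inl (e : E) (p : V) :
    lawlerCap pins ω (Sum.inr (e, true)) (Sum.inl p) = if p ∈ pins e then ⊤ else 0 := rfl
lemma cap_inrF_inrT (e e' : E) :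
    lawlerCap pins ω (Sum.inr (e, false)) (Sum.inr (e', true)) =
      if e = e' then ENNReal.ofReal (ω e) else 0 := rfl
lemma cap_inrF_inrF (e e' : E) :
    lawlerCap pins ω (Sum.inr (e, false)) (Sum.inr (e', false)) = 0 := rfl
lemma cap_inrT_inrT (e e' : E) :
    lawlerCap pins ω (Sum.inr (e, true)) (Sum.inr (e', true)) = 0 := rfl
lemma cap_inrT_inrF (e e' : E) :
    lawlerCap pins ω (Sum.inr (e, true)) (Sum.inr (e', false)) = 0 := rfl

lemma lawler_blocks (hω : ∀ e, 0 < ω e) (T : Set (V ⊕ E × Bool)) [DecidablePred (· ∈ T)] :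
    (∑ u, ∑ v, if u ∈ T ∧ v ∉ T then (lawlerCap pins ω u v).toReal else 0) =
    ∑ e, if Sum.inr (e, false) ∈ T ∧ Sum.inr (e, true) ∉ T then ω e else 0 := by
  classical
  have key : ∀ u v, (if u ∈ T ∧ v ∉ T then (lawlerCap pins ω u v).toReal else 0)
      = ∑ e : E, if u = Sum.inr (e, false) then
          (if v = Sum.inr (e, true) then (if u ∈ T ∧ v ∉ T then ω e else 0) else 0) else 0 := by
    rintro (p | ⟨e, b⟩) (q | ⟨e', b'⟩)
    · simp [cap_inl_inl]
    · rcases b' with _ | _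
      · have : (lawlerCap pins ω (Sum.inl p) (Sum.inr (e', false))).toReal = 0 := by
          rw [cap_inl_inrF]; split <;> simp
        simp [this]
      · simp [cap_inl_inrT]
    · rcases b with _ | _
      · simp [cap_inrF_inl]
      · have : (lawlerCap pins ω (Sum.inr (e, true)) (Sum.inl q)).toReal = 0 := by
          rw [cap_inrT_inl]; split <;> simp
        simp [this]
    · rcases b with _ | _ <;> rcases b' with _ | _
      · simp [cap_inrF_inrF]
      · -- the interesting case
        have hval : (lawlerCap pins ω (Sum.inr (e, false)) (Sum.inr (e', true))).toReal =
            if e = e' then ω e else 0 := by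
          rw [cap_inrF_inrT]
          split <;> simp [ENNReal.toReal_ofReal (hω e).le]
        rw [Finset.sum_eq_single e]
        · rw [if_pos rfl]
          by_cases he : e = e'
          · subst he
            rw [if_pos rfl, hval, if_pos rfl]
          · have h0 : (lawlerCap pins ω (Sum.inr (e, false)) (Sum.inr (e', true))).toReal = 0 := by
              rw [hval, if_neg he]
            have hne2 : ¬ ((Sum.inr (e', true) : V ⊕ E × Bool) = Sum.inr (e, true)) := by
              intro h
              injection h with h2
              injection h2 with h3 _
              exact he h3.symm
            rw [if_neg hne2]
            simp [h0]
        · intro e'' _ hne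
          rw [if_neg (by simp [hne.symm])]
        · intro h; exact absurd (Finset.mem_univ e) h
      · simp [cap_inrT_inrF]
      · simp [cap_inrT_inrT]
  calc (∑ u, ∑ v, if u ∈ T ∧ v ∉ T then (lawlerCap pins ω u v).toReal else 0)
      = ∑ u, ∑ v, ∑ e : E, if u = Sum.inr (e, false) then
          (if v = Sum.inr (e, true) then (if u ∈ T ∧ v ∉ T then ω e else 0) else 0) else 0 := by
        exact Finset.sum_congr rfl fun u _ => Finset.sum_congr rfl fun v _ => key u v
    _ = ∑ u, ∑ e : E, ∑ v, if u = Sum.inr (e, false) then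
          (if v = Sum.inr (e, true) then (if u ∈ T ∧ v ∉ T then ω e else 0) else 0) else 0 :=
        Finset.sum_congr rfl fun u _ => Finset.sum_comm
    _ = ∑ e : E, ∑ u, ∑ v, if u = Sum.inr (e, false) then
          (if v = Sum.inr (e, true) then (if u ∈ T ∧ v ∉ T then ω e else 0) else 0) else 0 :=
        Finset.sum_comm
    _ = ∑ e, if Sum.inr (e, false) ∈ T ∧ Sum.inr (e, true) ∉ T then ω e else 0 := by
        apply Finset.sum_congr rfl
        intro e _
        rw [Finset.sum_eq_single (Sum.inr (e, false) : V ⊕ E × Bool)]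
        · simp only [eq_self_iff_true, if_true]
          rw [Finset.sum_eq_single (Sum.inr (e, true) : V ⊕ E × Bool)]
          · simp only [eq_self_iff_true, if_true]
          · intro v _ hne; rw [if_neg hne]
          · intro h; exact absurd (Finset.mem_univ _) h
        · intro u _ hne
          exact Finset.sum_eq_zero fun v _ => if_neg hne
        · intro h; exact absurd (Finset.mem_univ _) h

end LawlerAux

def lawlerNodeSet {V E : Type} (pins : E → Finset V) (S : Set V) :
    Set (V ⊕ E × Bool) :=
  {x | match x with
    | Sum.inl v => v ∈ S
    | Sum.inr (e, false) => ∃ p ∈ pins e, p ∈ S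
    | Sum.inr (e, true) => (∃ p ∈ pins e, p ∈ S) ∧ ∀ p ∈ pins e, p ∈ S}

lemma flow_le_hypCutWeight {V E : Type} [Fintype V] [Fintype E] [DecidableEq V] [DecidableEq E]
    (pins : E → Finset V) (ω : E → ℝ) (hω : ∀ e, 0 < ω e)
    (s t : V) (g : V ⊕ E × Bool → V ⊕ E × Bool → ℝ)
    (hg : IsFlow (lawlerCap pins ω) (Sum.inl s) (Sum.inl t) g)
    (S : Set V) (hs : s ∈ S) (ht : t ∉ S) :
    flowValue g (Sum.inl s) ≤ hypCutWeight pins ω S := by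
  classical
  set T := lawlerNodeSet pins S with hTdef
  have hsT : Sum.inl s ∈ T := hs
  have htT : Sum.inl t ∉ T := ht
  have hfin : ∀ u v, u ∈ T → v ∉ T → lawlerCap pins ω u v ≠ ⊤ := by
    rintro (p | ⟨e, b⟩) (q | ⟨e', b'⟩) hu hv
    · rw [cap_inl_inl]; exact ENNReal.zero_ne_top
    · rcases b' with _ | _
      · rw [cap_inl_inrF]
        split_ifs with hp
        · exact absurd (⟨p, hp, hu⟩ :
            (∃ x ∈ pins e', x ∈ S)) hv
        · exact ENNReal.zero_ne_top
      · rw [cap_inl_inrT]; exact ENNReal.zero_ne_top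
    · rcases b with _ | _
      · rw [cap_inrF_inl]; exact ENNReal.zero_ne_top
      · rw [cap_inrT_inl]
        split_ifs with hq
        · exact absurd ((hu : (∃ x ∈ pins e, x ∈ S) ∧ ∀ x ∈ pins e, x ∈ S).2 q hq) hv
        · exact ENNReal.zero_ne_top
    · rcases b with _ | _ <;> rcases b' with _ | _
      · rw [cap_inrF_inrF]; exact ENNReal.zero_ne_top
      · rw [cap_inrF_inrT]
        split_ifs
        · exact ENNReal.ofReal_ne_top
        · exact ENNReal.zero_ne_top
      · rw [cap_inrT_inrF]; exact ENNReal.zero_ne_top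
      · rw [cap_inrT_inrT]; exact ENNReal.zero_ne_top
  rw [flow_across_cut hg T hsT htT]
  have step : (∑ u, ∑ v, if u ∈ T ∧ v ∉ T then g u v else 0)
      ≤ ∑ u, ∑ v, if u ∈ T ∧ v ∉ T then (lawlerCap pins ω u v).toReal else 0 := by
    apply Finset.sum_le_sum; intro u _; apply Finset.sum_le_sum; intro v _
    by_cases h : u ∈ T ∧ v ∉ T
    · rw [if_pos h, if_pos h]
      have h1 := hg.1 u v
      rw [← coe_toReal_ennreal _ (hfin u v h.1 h.2)] at h1
      exact_mod_cast h1
    · rw [if_neg h, if_neg h]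
  refine le_trans step (le_of_eq ?_)
  rw [lawler_blocks pins ω hω T]
  apply Finset.sum_congr rfl
  intro e _
  have hiff : (Sum.inr (e, false) ∈ T ∧ Sum.inr (e, true) ∉ T) ↔
      ((∃ p ∈ pins e, p ∈ S) ∧ (∃ p ∈ pins e, p ∉ S)) := by
    constructor
    · rintro ⟨h1, h2⟩
      refine ⟨h1, ?_⟩
      by_contra hno
      push_neg at hno
      exact h2 ⟨(h1 : ∃ p ∈ pins e, p ∈ S), hno⟩
    · rintro ⟨h1, ⟨q, hq, hqS⟩⟩
      exact ⟨h1, fun hmem =>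
        hqS ((hmem : (∃ p ∈ pins e, p ∈ S) ∧ ∀ p ∈ pins e, p ∈ S).2 q hq)⟩
  by_cases h : (∃ p ∈ pins e, p ∈ S) ∧ (∃ p ∈ pins e, p ∉ S)
  · rw [if_pos (hiff.mpr h), if_pos h]
  · rw [if_neg (fun hh => h (hiff.mp hh)), if_neg h]

/-- Let `f` be a maximum `(s,t)`-flow in the Lawler network and let
`A := {s} ∪ {v ∈ V | ∃ e ∋ v with e″ reachable from s in the residual network}`. Then
`s ∈ A`, `t ∉ A`, and `(A, V ∖ A)` is a minimum `(s,t)`-cut of the hypergraph: its cut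
weight equals the minimum cut weight over all bipartitions `(S, V ∖ S)` with `s ∈ S`
and `t ∉ S`. -/
theorem lawler_reachable_bridges_give_min_cut
    {V E : Type} [Fintype V] [Fintype E] [DecidableEq V] [DecidableEq E]
    (pins : E → Finset V) (ω : E → ℝ) (hω : ∀ e, 0 < ω e)
    (s t : V) (hst : s ≠ t)
    (f : V ⊕ E × Bool → V ⊕ E × Bool → ℝ)
    (hf : IsMaxFlow (lawlerCap pins ω) (Sum.inl s) (Sum.inl t) f)
    (A : Set V)
    (hA : A = insert s {v : V | ∃ e : E, v ∈ pins e ∧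
      Relation.ReflTransGen (ResidualEdge (lawlerCap pins ω) f)
        (Sum.inl s) (Sum.inr (e, true))}) :
    s ∈ A ∧ t ∉ A ∧
    (∀ S : Set V, s ∈ S → t ∉ S →
      hypCutWeight pins ω A ≤ hypCutWeight pins ω S) ∧
    hypCutWeight pins ω A =
      sInf {x : ℝ | ∃ S : Set V, s ∈ S ∧ t ∉ S ∧ hypCutWeight pins ω S = x} := by
  classical
  obtain ⟨⟨hcap, hskew, hcons⟩, hmax⟩ := hf
  set Rset : Set (V ⊕ E × Bool) :=
    {x | Relation.ReflTransGen (ResidualEdge (lawlerCap pins ω) f) (Sum.inl s) x} with hRdef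
  have hstn : (Sum.inl s : V ⊕ E × Bool) ≠ Sum.inl t := fun h => hst (Sum.inl.inj h)
  have htR : (Sum.inl t : V ⊕ E × Bool) ∉ Rset :=
    not_reachable_of_maxflow (lawlerCap pins ω) _ _ hstn f ⟨⟨hcap, hskew, hcons⟩, hmax⟩
  have hsR : (Sum.inl s : V ⊕ E × Bool) ∈ Rset := Relation.ReflTransGen.refl
  have res_top : ∀ u v, lawlerCap pins ω u v = ⊤ → ResidualEdge (lawlerCap pins ω) f u v := by
    intro u v h
    show (f u v : EReal) < (lawlerCap pins ω u v : EReal)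
    rw [h, EReal.coe_ennreal_top]
    exact EReal.coe_lt_top _
  have res_neg : ∀ u v, f u v < 0 → ResidualEdge (lawlerCap pins ω) f u v := by
    intro u v h
    show (f u v : EReal) < (lawlerCap pins ω u v : EReal)
    calc (f u v : EReal) < ((0 : ℝ) : EReal) := EReal.coe_lt_coe_iff.mpr h
      _ = (0 : EReal) := by norm_num
      _ ≤ _ := EReal.coe_ennreal_nonneg _
  have cpos_of_fpos : ∀ u v, 0 < f u v → lawlerCap pins ω u v ≠ 0 := by
    intro u v h h0
    have h1 := hcap u v
    rw [h0] at h1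
    have h2 : (f u v : EReal) ≤ ((0 : ℝ) : EReal) := by
      refine le_trans h1 (le_of_eq ?_)
      norm_num
    have : f u v ≤ 0 := EReal.coe_le_coe_iff.mp h2
    linarith
  have hsA : s ∈ A := by rw [hA]; exact Set.mem_insert _ _
  have htA : t ∉ A := by
    rw [hA]
    rintro (h | ⟨e, hte, hreach⟩)
    · exact hst h.symm
    · exact htR (hreach.tail (res_top _ _ (by rw [cap_inrT_inl, if_pos hte])))
  -- membership in A from reachability of a bridge node
  have memA : ∀ (p : V), p ∈ A ↔ p = s ∨ ∃ e : E, p ∈ pins e ∧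
      (Sum.inr (e, true) : V ⊕ E × Bool) ∈ Rset := by
    intro p
    rw [hA]
    exact Set.mem_insert_iff
  have pinR_of_memA : ∀ (p : V), p ∈ A → (Sum.inl p : V ⊕ E × Bool) ∈ Rset := by
    intro p hpA
    rcases (memA p).mp hpA with rfl | ⟨e₀, hpe₀, hreach⟩
    · exact hsR
    · exact hreach.tail (res_top _ _ (by rw [cap_inrT_inl, if_pos hpe₀]))
  -- the key combinatorial characterization
  have hkey : ∀ e : E, ((Sum.inr (e, false) : V ⊕ E × Bool) ∈ Rset ∧
      (Sum.inr (e, true) : V ⊕ E × Bool) ∉ Rset) ↔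
      ((∃ p ∈ pins e, p ∈ A) ∧ (∃ p ∈ pins e, p ∉ A)) := by
    intro e
    constructor
    · rintro ⟨hF, hT⟩
      have hsatur : f (Sum.inr (e, false)) (Sum.inr (e, true)) = ω e := by
        have h1 : ¬ ResidualEdge (lawlerCap pins ω) f (Sum.inr (e, false)) (Sum.inr (e, true)) :=
          fun hres => hT (hF.tail hres)
        have h3 : (f (Sum.inr (e, false)) (Sum.inr (e, true)) : EReal) =
            (lawlerCap pins ω (Sum.inr (e, false)) (Sum.inr (e, true)) : EReal) :=
          le_antisymm (hcap _ _) (not_lt.mp h1)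
        rw [cap_inrF_inrT, if_pos rfl] at h3
        have h4 : ((ENNReal.ofReal (ω e) : ℝ≥0∞) : EReal) = ((ω e : ℝ) : EReal) := by
          rw [← coe_toReal_ennreal _ ENNReal.ofReal_ne_top, ENNReal.toReal_ofReal (hω e).le]
        rw [h4] at h3
        exact_mod_cast h3
      constructor
      · -- a pin of e inside A
        have hex : ∃ v, f (Sum.inr (e, false)) v < 0 := by
          by_contra hno
          push_neg at hno
          have h0 := hcons (Sum.inr (e, false)) (by simp) (by simp)
          have hge : f (Sum.inr (e, false)) (Sum.inr (e, true)) ≤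
              ∑ v, f (Sum.inr (e, false)) v :=
            Finset.single_le_sum (fun v _ => hno v) (Finset.mem_univ _)
          rw [h0, hsatur] at hge
          linarith [hω e]
        obtain ⟨v, hv⟩ := hex
        have hfpos : 0 < f v (Sum.inr (e, false)) := by
          have h' := hskew v (Sum.inr (e, false)); linarith
        have hcv := cpos_of_fpos _ _ hfpos
        obtain ⟨p, hp, rfl⟩ : ∃ p, p ∈ pins e ∧ v = Sum.inl p := by
          rcases v with q | ⟨e₀, b⟩
          · refine ⟨q, ?_, rfl⟩
            by_contra hq
            exact hcv (by rw [cap_inl_inrF, if_neg hq])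
          · rcases b with _ | _
            · exact absurd (cap_inrF_inrF pins ω e₀ e) hcv
            · exact absurd (cap_inrT_inrF pins ω e₀ e) hcv
        have hpR : (Sum.inl p : V ⊕ E × Bool) ∈ Rset := hF.tail (res_neg _ _ hv)
        by_cases hps : p = s
        · exact ⟨p, hp, (memA p).mpr (Or.inl hps)⟩
        · have hpt : p ≠ t := fun h => htR (h ▸ hpR)
          have hex2 : ∃ w, f (Sum.inl p) w < 0 := by
            by_contra hno
            push_neg at hno
            have h0 := hcons (Sum.inl p) (by simpa using hps) (by simpa using hpt)
            have hge : f (Sum.inl p) (Sum.inr (e, false)) ≤ ∑ w, f (Sum.inl p) w :=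
              Finset.single_le_sum (fun w _ => hno w) (Finset.mem_univ _)
            rw [h0] at hge
            linarith
          obtain ⟨w, hw⟩ := hex2
          have hfpos2 : 0 < f w (Sum.inl p) := by
            have h' := hskew w (Sum.inl p); linarith
          have hcw := cpos_of_fpos _ _ hfpos2
          obtain ⟨e₀, hpe₀, rfl⟩ : ∃ e₀, p ∈ pins e₀ ∧ w = Sum.inr (e₀, true) := by
            rcases w with q | ⟨e₀, b⟩
            · exact absurd (cap_inl_inl pins ω q p) hcw
            · rcases b with _ | _
              · exact absurd (cap_inrF_inl pins ω e₀ p) hcw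
              · refine ⟨e₀, ?_, rfl⟩
                by_contra hq
                exact hcw (by rw [cap_inrT_inl, if_neg hq])
          have hreach : (Sum.inr (e₀, true) : V ⊕ E × Bool) ∈ Rset :=
            hpR.tail (res_neg _ _ hw)
          exact ⟨p, hp, (memA p).mpr (Or.inr ⟨e₀, hpe₀, hreach⟩)⟩
      · -- a pin of e outside A
        have hex : ∃ v, 0 < f (Sum.inr (e, true)) v := by
          by_contra hno
          push_neg at hno
          have h0 := hcons (Sum.inr (e, true)) (by simp) (by simp)
          rw [← Finset.add_sum_erase _ _
            (Finset.mem_univ (Sum.inr (e, false) : V ⊕ E × Bool))] at h0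
          have hneg : f (Sum.inr (e, true)) (Sum.inr (e, false)) = - ω e := by
            have h' := hskew (Sum.inr (e, true)) (Sum.inr (e, false)); rw [h', hsatur]
          have hle : ∑ v ∈ Finset.univ.erase (Sum.inr (e, false) : V ⊕ E × Bool),
              f (Sum.inr (e, true)) v ≤ 0 :=
            Finset.sum_nonpos (fun v _ => hno v)
          rw [hneg] at h0
          linarith [hω e]
        obtain ⟨v, hv⟩ := hex
        have hcv := cpos_of_fpos _ _ hv
        obtain ⟨q, hq, rfl⟩ : ∃ q, q ∈ pins e ∧ v = Sum.inl q := by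
          rcases v with q | ⟨e₀, b⟩
          · refine ⟨q, ?_, rfl⟩
            by_contra hq
            exact hcv (by rw [cap_inrT_inl, if_neg hq])
          · rcases b with _ | _
            · exact absurd (cap_inrT_inrF pins ω e e₀) hcv
            · exact absurd (cap_inrT_inrT pins ω e e₀) hcv
        refine ⟨q, hq, fun hqA => ?_⟩
        have hqR : (Sum.inl q : V ⊕ E × Bool) ∈ Rset := pinR_of_memA q hqA
        exact hT (hqR.tail (res_neg _ _ (by
          have h' := hskew (Sum.inl q) (Sum.inr (e, true)); linarith)))
    · rintro ⟨⟨p, hp, hpA⟩, ⟨q, hq, hqA⟩⟩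
      constructor
      · exact (pinR_of_memA p hpA).tail (res_top _ _ (by rw [cap_inl_inrF, if_pos hp]))
      · intro hT
        exact hqA ((memA q).mpr (Or.inr ⟨e, hq, hT⟩))
  -- value of the maximum flow equals the cut weight of A
  have hval : flowValue f (Sum.inl s) = hypCutWeight pins ω A := by
    rw [flow_across_cut ⟨hcap, hskew, hcons⟩ Rset hsR htR]
    have step1 : (∑ u, ∑ v, if u ∈ Rset ∧ v ∉ Rset then f u v else 0)
        = ∑ u, ∑ v, if u ∈ Rset ∧ v ∉ Rset then (lawlerCap pins ω u v).toReal else 0 := by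
      apply Finset.sum_congr rfl; intro u _
      apply Finset.sum_congr rfl; intro v _
      by_cases h : u ∈ Rset ∧ v ∉ Rset
      · rw [if_pos h, if_pos h]
        have hnr : ¬ ResidualEdge (lawlerCap pins ω) f u v := fun hres => h.2 (h.1.tail hres)
        have heq : (f u v : EReal) = (lawlerCap pins ω u v : EReal) :=
          le_antisymm (hcap u v) (not_lt.mp hnr)
        have hne : lawlerCap pins ω u v ≠ ⊤ := by
          intro htop
          rw [htop, EReal.coe_ennreal_top] at heq
          exact EReal.coe_ne_top _ heq
        rw [← coe_toReal_ennreal _ hne] at heq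
        exact_mod_cast heq
      · rw [if_neg h, if_neg h]
    rw [step1, lawler_blocks pins ω hω Rset]
    apply Finset.sum_congr rfl
    intro e _
    by_cases h : (∃ p ∈ pins e, p ∈ A) ∧ (∃ p ∈ pins e, p ∉ A)
    · rw [if_pos ((hkey e).mpr h), if_pos h]
    · rw [if_neg (fun hh => h ((hkey e).mp hh)), if_neg h]
  have hmin : ∀ S : Set V, s ∈ S → t ∉ S →
      hypCutWeight pins ω A ≤ hypCutWeight pins ω S := by
    intro S hsS htS
    rw [← hval]
    exact flow_le_hypCutWeight pins ω hω s t f ⟨hcap, hskew, hcons⟩ S hsS htS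
  refine ⟨hsA, htA, hmin, ?_⟩
  have hlb : ∀ x ∈ {x : ℝ | ∃ S : Set V, s ∈ S ∧ t ∉ S ∧ hypCutWeight pins ω S = x},
      hypCutWeight pins ω A ≤ x := by
    rintro x ⟨S, h1, h2, rfl⟩
    exact hmin S h1 h2
  have hmem : hypCutWeight pins ω A ∈
      {x : ℝ | ∃ S : Set V, s ∈ S ∧ t ∉ S ∧ hypCutWeight pins ω S = x} :=
    ⟨A, hsA, htA, rfl⟩
  exact le_antisymm
    (le_csInf ⟨_, hmem⟩ hlb)
    (csInf_le ⟨hypCutWeight pins ω A, fun x hx => hlb x hx⟩ hmem)
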